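/- Let n ≥ 2 be an integer, γ ∈ (0,1/2), and let u/q be a rational number with u ∈ ℤ, q ∈ ℤ, q ≥ 1. Then for every real x the limit defining U(u/q, x) exists and U(u/q, x) = (1/q)·Σ_{v=0}^{q−1} ( Σ_{w=0}^{q−1} e((u·w^n − v·w)/q) )·f_γ(x + v/q). In particular, x ↦ U(u/q, x) is piecewise constant: it is constant on every interval that contains no point of the finite-modulo-1 set { v/q + σγ + l : 0 ≤ v < q, σ ∈ {+1,−1}, l ∈ ℤ }. -/

import Mathlib

open Filter Finset MeasureTheory

/-- `e(ξ) = exp(2πiξ)`. -/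
noncomputable def ee (ξ : ℝ) : ℂ := Complex.exp (2 * Real.pi * Complex.I * ξ)

/-- The partial sum defining `U(t,x)`:
`2γ + Σ_{0<|k|≤K} (sin(2πγk)/(πk))·e(t·k^n + x·k)`. -/
noncomputable def Upartial (n : ℕ) (γ t x : ℝ) (K : ℕ) : ℂ :=
  Complex.ofReal (2 * γ) +
    ∑ k ∈ (Finset.Icc (-(K : ℤ)) (K : ℤ)).filter (· ≠ 0),
      Complex.ofReal (Real.sin (2 * Real.pi * γ * (k : ℝ)) / (Real.pi * (k : ℝ))) *
        ee (t * (k : ℝ) ^ n + x * (k : ℝ))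

/-- `f_γ`: the 1-periodic function equal to `1` at points whose distance to the nearest
integer is `< γ`, to `1/2` at distance exactly `γ`, and to `0` otherwise. -/
noncomputable def fgam (γ x : ℝ) : ℝ :=
  if |x - round x| < γ then 1 else if |x - round x| = γ then 1 / 2 else 0

/-- The value `(1/q)·Σ_v (Σ_w e((u·w^n − v·w)/q))·f_γ(x + v/q)`. -/
noncomputable def Uq (n : ℕ) (γ : ℝ) (u q : ℤ) (x : ℝ) : ℂ :=
  (q : ℂ)⁻¹ * ∑ v ∈ Finset.range q.toNat,
    (∑ w ∈ Finset.range q.toNat,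
      ee (((u * (w : ℤ) ^ n - (v : ℤ) * (w : ℤ) : ℤ) : ℝ) / (q : ℝ))) *
      Complex.ofReal (fgam γ (x + (v : ℝ) / (q : ℝ)))


open Real Complex


lemma ee_add (a b : ℝ) : ee (a + b) = ee a * ee b := by
  simp only [ee, ← Complex.exp_add]
  congr 1
  push_cast
  ring

lemma ee_int (m : ℤ) : ee m = 1 := by
  rw [ee, show 2 * (Real.pi:ℂ) * Complex.I * (m:ℝ) = (m:ℤ) * (2 * Real.pi * Complex.I) by push_cast; ring]
  exact Complex.exp_int_mul_two_pi_mul_I m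

lemma ee_zero : ee 0 = 1 := by simpa using ee_int 0

lemma ee_eq_one_iff {ξ : ℝ} : ee ξ = 1 ↔ ∃ m : ℤ, ξ = m := by
  rw [ee, Complex.exp_eq_one_iff]
  constructor
  · rintro ⟨m, hm⟩
    refine ⟨m, ?_⟩
    have h2 : (2 * (Real.pi:ℂ) * Complex.I) ≠ 0 := by
      simp [Complex.I_ne_zero, Real.pi_ne_zero, Complex.ofReal_ne_zero]
    have : (ξ:ℂ) = m := by
      have hm' : (ξ:ℂ) * (2 * (Real.pi:ℂ) * Complex.I) = (m:ℂ) * (2 * (Real.pi:ℂ) * Complex.I) := by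
        rw [← hm]; ring
      exact mul_right_cancel₀ h2 hm'
    exact_mod_cast this
  · rintro ⟨m, rfl⟩
    exact ⟨m, by push_cast; ring⟩

lemma ee_pow (m : ℕ) (ξ : ℝ) : ee ξ ^ m = ee (m * ξ) := by
  rw [ee, ee, ← Complex.exp_nat_mul]
  congr 1
  push_cast
  ring

lemma ee_div_congr {q : ℤ} (hq : 1 ≤ q) {a b : ℤ} (h : q ∣ (a - b)) :
    ee ((a : ℝ) / q) = ee ((b : ℝ) / q) := by
  obtain ⟨d, hd⟩ := h
  have hq0 : (q : ℝ) ≠ 0 := by positivity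
  have : (a : ℝ) / q = (b : ℝ) / q + (d : ℤ) := by
    have : (a : ℝ) = b + q * d := by exact_mod_cast congrArg (Int.cast : ℤ → ℝ) (by linarith [hd] : a = b + q * d)
    rw [this]; field_simp
  rw [this, ee_add, ee_int, mul_one]

lemma sum_ee_eq {q : ℤ} (hq : 1 ≤ q) (m : ℤ) :
    ∑ v ∈ Finset.range q.toNat, ee ((v : ℝ) * m / q) = if q ∣ m then (q : ℂ) else 0 := by
  have hq0 : (q : ℝ) ≠ 0 := by positivity
  have hqt : ((q.toNat : ℕ) : ℝ) = (q : ℝ) := by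
    exact_mod_cast congrArg (Int.cast : ℤ → ℝ) (Int.toNat_of_nonneg (by linarith))
  have hform : ∀ v : ℕ, ee ((v : ℝ) * m / q) = ee ((m : ℝ) / q) ^ v := by
    intro v; rw [ee_pow]; congr 1; ring
  simp_rw [hform]
  split_ifs with h
  · obtain ⟨d, rfl⟩ := h
    have : ((q * d : ℤ) : ℝ) / q = (d : ℤ) := by push_cast; field_simp
    rw [this, ee_int]
    simp only [one_pow, Finset.sum_const, Finset.card_range, nsmul_eq_mul, mul_one]
    exact_mod_cast congrArg (Int.cast : ℤ → ℂ) (Int.toNat_of_nonneg (by linarith : (0:ℤ) ≤ q))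
  · have hz : ee ((m : ℝ) / q) ≠ 1 := by
      intro hone
      obtain ⟨d, hd⟩ := ee_eq_one_iff.mp hone
      apply h
      refine ⟨d, ?_⟩
      have : (m : ℝ) = q * d := by field_simp at hd; linarith
      exact_mod_cast this
    rw [geom_sum_eq hz]
    have : ee ((m:ℝ)/q) ^ q.toNat = 1 := by
      rw [ee_pow, hqt]
      rw [show (q:ℝ) * ((m:ℝ)/q) = ((m:ℤ):ℝ) by field_simp]
      exact ee_int m
    rw [this, sub_self, zero_div]

/-- character decomposition of `e(u k^n / q)` -/
lemma decomp (n : ℕ) (hn : 1 ≤ n) (u : ℤ) {q : ℤ} (hq : 1 ≤ q) (k : ℤ) :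
    ∑ v ∈ Finset.range q.toNat,
      (∑ w ∈ Finset.range q.toNat, ee (((u * (w:ℤ) ^ n - (v:ℤ) * (w:ℤ) : ℤ) : ℝ) / q)) *
        ee ((v : ℝ) * k / q)
      = (q : ℂ) * ee (((u * k ^ n : ℤ) : ℝ) / q) := by
  have hq0 : (q : ℝ) ≠ 0 := by positivity
  -- rewrite each term
  have step1 : ∀ v ∈ Finset.range q.toNat, ∀ w ∈ Finset.range q.toNat,
      ee (((u * (w:ℤ) ^ n - (v:ℤ) * (w:ℤ) : ℤ) : ℝ) / q) * ee ((v : ℝ) * k / q)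
      = ee (((u * (w:ℤ) ^ n : ℤ) : ℝ) / q) * ee ((v : ℝ) * ((k - w : ℤ) : ℝ) / q) := by
    intro v _ w _
    rw [← ee_add, ← ee_add]
    congr 1
    push_cast
    field_simp
    ring
  calc ∑ v ∈ Finset.range q.toNat,
      (∑ w ∈ Finset.range q.toNat, ee (((u * (w:ℤ) ^ n - (v:ℤ) * (w:ℤ) : ℤ) : ℝ) / q)) *
        ee ((v : ℝ) * k / q)
      = ∑ w ∈ Finset.range q.toNat, ee (((u * (w:ℤ) ^ n : ℤ) : ℝ) / q) *
          ∑ v ∈ Finset.range q.toNat, ee ((v : ℝ) * ((k - w : ℤ) : ℝ) / q) := by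
        rw [Finset.sum_congr rfl (fun v hv => by
          rw [Finset.sum_mul, Finset.sum_congr rfl (fun w hw => step1 v hv w hw)]),
          Finset.sum_comm]
        exact Finset.sum_congr rfl (fun w _ => (Finset.mul_sum _ _ _).symm)
    _ = (q : ℂ) * ee (((u * k ^ n : ℤ) : ℝ) / q) := by
        have hsum : ∀ w ∈ Finset.range q.toNat,
            ee (((u * (w:ℤ) ^ n : ℤ) : ℝ) / q) *
              (∑ v ∈ Finset.range q.toNat, ee ((v : ℝ) * ((k - w : ℤ) : ℝ) / q))
            = ee (((u * (w:ℤ) ^ n : ℤ) : ℝ) / q) * (if q ∣ (k - w) then (q:ℂ) else 0) := by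
          intro w _
          rw [sum_ee_eq hq]
        rw [Finset.sum_congr rfl hsum]
        set w₀ : ℕ := (k % q).toNat with hw₀
        have hklt : (k % q) < q := Int.emod_lt_of_pos k (by linarith)
        have hkge : 0 ≤ k % q := Int.emod_nonneg k (by omega)
        have hw₀q : (w₀ : ℤ) = k % q := Int.toNat_of_nonneg hkge
        have hmem : w₀ ∈ Finset.range q.toNat := by
          rw [Finset.mem_range]
          omega
        rw [Finset.sum_eq_single w₀]
        · have hdvd : q ∣ (k - w₀) := by
            rw [hw₀q]
            exact Int.dvd_self_sub_of_emod_eq rfl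
          rw [if_pos hdvd]
          rw [mul_comm]
          congr 1
          apply ee_div_congr hq
          have hmod : (w₀ : ℤ) % q = k % q := by rw [hw₀q]; simp [Int.emod_emod_of_dvd]
          have : ((w₀:ℤ)^n) % q = (k^n) % q := by
            exact Int.ModEq.pow n (by exact hmod)
          have : (u * (w₀:ℤ)^n) % q = (u * k^n) % q := Int.ModEq.mul_left u this
          exact Int.ModEq.dvd (Int.ModEq.symm this)
        · intro w hw hne
          have : ¬ q ∣ (k - w) := by
            intro hdvd
            apply hne
            have h1 : (w:ℤ) % q = k % q := Int.modEq_iff_dvd.mpr hdvd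
            have : (w : ℤ) = k % q := by
              rw [← h1]
              rw [Finset.mem_range] at hw
              exact (Int.emod_eq_of_lt (by omega) (by omega)).symm
            omega
          rw [if_neg this, mul_zero]
        · intro h; exact absurd hmem h
lemma exp_im_aux (a : ℝ) : (Complex.exp (↑a * Complex.I)).im = Real.sin a := by
  rw [Complex.exp_mul_I]; simp [Complex.sin_ofReal_re]

lemma tendsto_sin_series {θ : ℝ} (hθ : θ ∈ Set.Ioo (0:ℝ) 1) :
    Tendsto (fun N => ∑ j ∈ Finset.range N, Real.sin (2*π*((j:ℝ)+1)*θ)/((j:ℝ)+1)) atTop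
      (nhds (π * (1/2 - θ))) := by
  obtain ⟨hθ0, hθ1⟩ := hθ
  set z : ℂ := Complex.exp ((2*π*θ : ℝ) * Complex.I) with hzdef
  have hznorm : ‖z‖ = 1 := Complex.norm_exp_ofReal_mul_I _
  have hz1 : z ≠ 1 := by
    intro h
    rw [Complex.exp_eq_one_iff] at h
    obtain ⟨m, hm⟩ := h
    have hI : ((2*π*θ : ℝ) : ℂ) = 2 * ↑π * ↑m := by
      have h2 : (Complex.I) ≠ 0 := Complex.I_ne_zero
      have := mul_right_cancel₀ h2 (by rw [hm]; ring :
        ((2*π*θ : ℝ) : ℂ) * Complex.I = ((2:ℂ) * ↑π * ↑m) * Complex.I)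
      exact this
    have : 2*π*θ = 2*π*(m:ℝ) := by exact_mod_cast hI
    have hθm : θ = (m:ℝ) := by
      have hπ : (2*π) ≠ 0 := by positivity
      field_simp at this
      tauto
    rcases le_or_gt m 0 with h | h
    · have : (m:ℝ) ≤ 0 := by exact_mod_cast h
      linarith
    · have : (1:ℝ) ≤ (m:ℝ) := by exact_mod_cast h
      linarith
  have hzm1 : ‖z - 1‖ ≠ 0 := by
    simp only [ne_eq, norm_eq_zero, sub_eq_zero]
    exact hz1
  -- Dirichlet test
  have hbound : ∀ m : ℕ, ‖∑ i ∈ Finset.range m, z^(i+1)‖ ≤ 2 / ‖z - 1‖ := by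
    intro m
    have : ∑ i ∈ Finset.range m, z^(i+1) = z * ((z^m - 1)/(z - 1)) := by
      rw [← geom_sum_eq hz1, Finset.mul_sum]
      exact Finset.sum_congr rfl (fun i _ => by ring)
    rw [this, norm_mul, norm_div]
    have h1 : ‖z‖ = 1 := hznorm
    have h2 : ‖z^m - 1‖ ≤ 2 := by
      calc ‖z^m - 1‖ ≤ ‖z^m‖ + ‖(1:ℂ)‖ := norm_sub_le _ _
        _ = 1 + 1 := by rw [norm_pow, h1]; simp
        _ = 2 := by norm_num
    have hpos : 0 < ‖z-1‖ := lt_of_le_of_ne (norm_nonneg _) (Ne.symm hzm1)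
    rw [h1, one_mul]
    gcongr
  -- convergence of the series ∑ z^(i+1)/(i+1)
  have hanti : Antitone (fun i : ℕ => (1:ℝ)/((i:ℝ)+1)) := by
    intro i j hij
    have : ((i:ℝ)+1) ≤ ((j:ℝ)+1) := by exact_mod_cast Nat.succ_le_succ hij
    apply one_div_le_one_div_of_le <;> [positivity; exact this]
  have htend0 : Tendsto (fun i : ℕ => (1:ℝ)/((i:ℝ)+1)) atTop (nhds 0) :=
    tendsto_one_div_add_atTop_nhds_zero_nat
  have hcauchy : CauchySeq (fun m => ∑ i ∈ Finset.range m, ((1:ℝ)/((i:ℝ)+1)) • z^(i+1)) :=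
    hanti.cauchySeq_series_mul_of_tendsto_zero_of_bounded htend0 hbound
  obtain ⟨L, hL⟩ := cauchySeq_tendsto_of_complete hcauchy
  -- Abel's limit theorem
  set f : ℕ → ℂ := fun k => z^k / (k:ℂ) with hfdef
  have hf : Tendsto (fun m => ∑ k ∈ Finset.range m, f k) atTop (nhds L) := by
    rw [← tendsto_add_atTop_iff_nat 1]
    have key : ∀ m : ℕ, ∑ k ∈ Finset.range (m+1), f k
        = ∑ i ∈ Finset.range m, ((1:ℝ)/((i:ℝ)+1)) • z^(i+1) := by
      intro m
      rw [Finset.sum_range_succ']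
      simp only [hfdef, Nat.cast_zero, pow_zero, div_zero, add_zero]
      refine Finset.sum_congr rfl (fun i _ => ?_)
      push_cast
      rw [Complex.real_smul]
      push_cast
      ring
    simp only [key]
    exact hL
  have habel := Complex.tendsto_tsum_powerSeries_nhdsWithin_lt hf
  rw [tendsto_map'_iff] at habel
  -- identify the limit via the logarithm
  have hslit : (1 - z) ∈ Complex.slitPlane := by
    left
    have hre : z.re = Real.cos (2*π*θ) := by
      rw [hzdef]
      exact Complex.exp_ofReal_mul_I_re _
    simp only [Complex.sub_re, Complex.one_re, hre]
    have hsin : 0 < Real.sin (π*θ) := by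
      apply Real.sin_pos_of_pos_of_lt_pi
      · positivity
      · nlinarith [Real.pi_pos]
    have hcos : Real.cos (2*π*θ) = 1 - 2 * Real.sin (π*θ)^2 := by
      have h2 : 2*π*θ = 2*(π*θ) := by ring
      rw [h2, Real.cos_two_mul]
      nlinarith [Real.sin_sq_add_cos_sq (π*θ)]
    rw [hcos]
    nlinarith
  have hloglim : Tendsto (fun r : ℝ => -Complex.log (1 - ↑r * z)) (nhdsWithin 1 (Set.Iio (1:ℝ)))
      (nhds (-Complex.log (1 - z))) := by
    have hc1 : Tendsto (fun r : ℝ => 1 - (r:ℂ) * z) (nhdsWithin 1 (Set.Iio (1:ℝ))) (nhds (1 - z)) := by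
      apply Tendsto.mono_left ?_ nhdsWithin_le_nhds
      have : Continuous (fun r : ℝ => 1 - (r:ℂ) * z) := by continuity
      simpa using this.tendsto 1
    exact (hc1.clog hslit).neg
  have heq : ∀ᶠ (r : ℝ) in nhdsWithin (1:ℝ) (Set.Iio (1:ℝ)), ∑' k, f k * (r:ℂ)^k = -Complex.log (1 - (r:ℂ) * z) := by
    filter_upwards [Ioo_mem_nhdsLT_of_mem (by norm_num : (1:ℝ) ∈ Set.Ioc (-1:ℝ) 1)] with r hr
    have hrz : ‖(r:ℂ) * z‖ < 1 := by
      rw [norm_mul, hznorm, mul_one, Complex.norm_real, Real.norm_eq_abs, abs_lt]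
      exact ⟨hr.1, hr.2.trans_le le_rfl⟩
    have hs : HasSum (fun k : ℕ => ((r:ℂ)*z)^k / k) (-Complex.log (1 - ↑r*z)) :=
      Complex.hasSum_taylorSeries_neg_log hrz
    rw [← hs.tsum_eq]
    apply tsum_congr
    intro k
    rw [hfdef]
    rw [mul_pow]
    ring
  have hL_eq : L = -Complex.log (1 - z) := tendsto_nhds_unique (habel.congr' heq) hloglim
  -- compute the argument of 1 - z
  have hsin : 0 < Real.sin (π*θ) := by
    apply Real.sin_pos_of_pos_of_lt_pi
    · positivity
    · nlinarith [Real.pi_pos]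
  have harg : Complex.arg (1 - z) = π*θ - π/2 := by
    have hface : 1 - z = ↑(2*Real.sin (π*θ)) *
        (Complex.cos ↑(π*θ - π/2) + Complex.sin ↑(π*θ - π/2) * Complex.I) := by
      rw [← Complex.ofReal_cos, ← Complex.ofReal_sin]
      apply Complex.ext <;>
        simp only [Complex.sub_re, Complex.sub_im, Complex.one_re, Complex.one_im, hzdef,
          Complex.exp_ofReal_mul_I_re, Complex.exp_ofReal_mul_I_im,
          Complex.mul_re, Complex.mul_im, Complex.add_re, Complex.add_im,
          Complex.ofReal_re, Complex.ofReal_im, Complex.I_re, Complex.I_im,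
          Real.cos_sub_pi_div_two, Real.sin_sub_pi_div_two]
      · have h2 : 2*π*θ = 2*(π*θ) := by ring
        rw [h2, Real.cos_two_mul]
        nlinarith [Real.sin_sq_add_cos_sq (π*θ)]
      · have h2 : 2*π*θ = 2*(π*θ) := by ring
        rw [h2, Real.sin_two_mul]
        ring
    rw [hface]
    exact Complex.arg_mul_cos_add_sin_mul_I (by positivity)
      ⟨by nlinarith [Real.pi_pos], by nlinarith [Real.pi_pos]⟩
  have hLim : L.im = π * (1/2 - θ) := by
    rw [hL_eq, Complex.neg_im, Complex.log_im, harg]; ring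
  have him := (Complex.continuous_im.tendsto L).comp hL
  have hseq : ∀ m : ℕ, (∑ i ∈ Finset.range m, ((1:ℝ)/((i:ℝ)+1)) • z^(i+1)).im
      = ∑ j ∈ Finset.range m, Real.sin (2*π*((j:ℝ)+1)*θ)/((j:ℝ)+1) := by
    intro m
    rw [Complex.im_sum]
    refine Finset.sum_congr rfl (fun i _ => ?_)
    have hzp : z^(i+1) = Complex.exp (↑(2*π*θ*((i:ℝ)+1)) * Complex.I) := by
      rw [hzdef, ← Complex.exp_nat_mul]
      congr 1
      push_cast
      ring
    rw [Complex.smul_im, hzp, Complex.exp_ofReal_mul_I_im,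
      show 2*π*((i:ℝ)+1)*θ = 2*π*θ*((i:ℝ)+1) by ring]
    simp [smul_eq_mul]
    ring
  have hfinal : Tendsto (fun m => ∑ j ∈ Finset.range m, Real.sin (2*π*((j:ℝ)+1)*θ)/((j:ℝ)+1))
      atTop (nhds L.im) := by
    have : (fun m => ∑ j ∈ Finset.range m, Real.sin (2*π*((j:ℝ)+1)*θ)/((j:ℝ)+1))
        = (Complex.im ∘ fun m => ∑ i ∈ Finset.range m, ((1:ℝ)/((i:ℝ)+1)) • z^(i+1)) := by
      funext m
      exact (hseq m).symm
    rw [this]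
    exact him
  rwa [hLim] at hfinal

noncomputable def saw (θ : ℝ) : ℝ := if Int.fract θ = 0 then 0 else Real.pi * (1/2 - Int.fract θ)


lemma tendsto_saw (θ : ℝ) :
    Tendsto (fun N => ∑ j ∈ Finset.range N, Real.sin (2*π*((j:ℝ)+1)*θ)/((j:ℝ)+1)) atTop
      (nhds (saw θ)) := by
  have hper : ∀ j : ℕ, Real.sin (2*π*((j:ℝ)+1)*θ) = Real.sin (2*π*((j:ℝ)+1)*(Int.fract θ)) := by
    intro j
    have harg : 2*π*((j:ℝ)+1)*θ = 2*π*((j:ℝ)+1)*(Int.fract θ) + ((j+1)*⌊θ⌋ : ℤ) * (2*π) := by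
      have hfr : Int.fract θ = θ - (⌊θ⌋:ℝ) := Int.self_sub_floor θ ▸ rfl
      rw [hfr]
      push_cast
      ring
    rw [harg, Real.sin_add_int_mul_two_pi]
  simp only [hper]
  rcases eq_or_ne (Int.fract θ) 0 with h | h
  · rw [saw, if_pos h, h]
    simp only [mul_zero, Real.sin_zero, zero_div, Finset.sum_const_zero]
    exact tendsto_const_nhds
  · rw [saw, if_neg h]
    exact tendsto_sin_series
      ⟨lt_of_le_of_ne (Int.fract_nonneg θ) (Ne.symm h), Int.fract_lt_one θ⟩

lemma fract_of_neg {x : ℝ} (h0 : 0 ≤ x + 1) (h1 : x < 0) : Int.fract x = x + 1 := by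
  have h := Int.fract_add_intCast x (1:ℤ)
  rw [← h, show x + ((1:ℤ):ℝ) = x + 1 by push_cast; ring]
  exact Int.fract_eq_self.mpr ⟨h0, by linarith⟩

lemma fgam_eq {γ : ℝ} (hγ0 : 0 < γ) (hγ2 : γ < 1/2) (y : ℝ) :
    fgam γ y = 2*γ + (saw (y+γ) - saw (y-γ))/π := by
  have hπ : (π:ℝ) ≠ 0 := Real.pi_ne_zero
  set s : ℝ := y - round y with hs
  have hsabs : |s| ≤ 1/2 := abs_sub_round y
  have hsabs1 := abs_le.mp hsabs
  have hy : y = s + ((round y : ℤ) : ℝ) := by rw [hs]; push_cast; ring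
  have hfp : Int.fract (y + γ) = Int.fract (s + γ) := by
    rw [hy, show s + ((round y : ℤ):ℝ) + γ = (s + γ) + ((round y : ℤ):ℝ) by ring,
      Int.fract_add_intCast]
  have hfm : Int.fract (y - γ) = Int.fract (s - γ) := by
    rw [hy, show s + ((round y : ℤ):ℝ) - γ = (s - γ) + ((round y : ℤ):ℝ) by ring,
      Int.fract_add_intCast]
  rw [fgam, ← hs, saw, saw, hfp, hfm]
  rcases lt_trichotomy |s| γ with hlt | heqq | hgt
  · rw [if_pos hlt]
    have habs := abs_lt.mp hlt
    have h1 : Int.fract (s + γ) = s + γ :=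
      Int.fract_eq_self.mpr ⟨by linarith, by linarith⟩
    have h2 : Int.fract (s - γ) = s - γ + 1 :=
      fract_of_neg (by linarith) (by linarith)
    rw [h1, h2, if_neg (show ¬(s + γ = 0) by intro h0; linarith),
      if_neg (show ¬(s - γ + 1 = 0) by intro h0; linarith)]
    field_simp
    ring
  · rw [if_neg (by rw [heqq]; exact lt_irrefl γ), if_pos heqq]
    rcases abs_eq (le_of_lt hγ0) |>.mp heqq with h | h
    · have h1 : Int.fract (s + γ) = 2*γ := by
        rw [h, show γ + γ = 2*γ by ring]
        exact Int.fract_eq_self.mpr ⟨by linarith, by linarith⟩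
      have h2 : Int.fract (s - γ) = 0 := by rw [h]; simp
      rw [h1, h2, if_neg (show ¬((2:ℝ)*γ = 0) by intro h0; linarith), if_pos rfl]
      field_simp
      ring
    · have h1 : Int.fract (s + γ) = 0 := by rw [h]; simp
      have h2 : Int.fract (s - γ) = 1 - 2*γ := by
        rw [h, show -γ - γ = -(2*γ) by ring, fract_of_neg (by linarith) (by linarith)]
        ring
      rw [h1, h2, if_pos rfl, if_neg (show ¬((1:ℝ) - 2*γ = 0) by intro h0; linarith)]
      field_simp
      ring
  · rw [if_neg (by intro h0; linarith), if_neg (by intro h0; linarith)]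
    rcases le_or_gt 0 s with hpos | hneg
    · rw [_root_.abs_of_nonneg hpos] at hgt
      have h1 : Int.fract (s + γ) = s + γ :=
        Int.fract_eq_self.mpr ⟨by linarith, by linarith⟩
      have h2 : Int.fract (s - γ) = s - γ :=
        Int.fract_eq_self.mpr ⟨by linarith, by linarith⟩
      rw [h1, h2, if_neg (show ¬(s + γ = 0) by intro h0; linarith),
        if_neg (show ¬(s - γ = 0) by intro h0; linarith)]
      field_simp
      ring
    · rw [_root_.abs_of_neg hneg] at hgt
      have h1 : Int.fract (s + γ) = s + γ + 1 :=
        fract_of_neg (by linarith) (by linarith)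
      have h2 : Int.fract (s - γ) = s - γ + 1 :=
        fract_of_neg (by linarith) (by linarith)
      rw [h1, h2, if_neg (show ¬(s + γ + 1 = 0) by intro h0; linarith),
        if_neg (show ¬(s - γ + 1 = 0) by intro h0; linarith)]
      field_simp
      ring

lemma ee_eq' (ξ : ℝ) : ee ξ = Complex.exp (((2*π*ξ : ℝ) : ℂ) * Complex.I) := by
  rw [ee]; congr 1; push_cast; ring

lemma ee_add_neg (ξ : ℝ) : ee ξ + ee (-ξ) = ((2 * Real.cos (2*π*ξ) : ℝ) : ℂ) := by
  rw [ee_eq', ee_eq', show 2*π*(-ξ) = -(2*π*ξ) by ring]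
  push_cast
  rw [Complex.exp_mul_I, Complex.exp_mul_I, Complex.cos_neg, Complex.sin_neg]
  ring

lemma pairing (γ y : ℝ) (K : ℕ) :
    ∑ k ∈ (Finset.Icc (-(K : ℤ)) (K : ℤ)).filter (· ≠ 0),
      Complex.ofReal (Real.sin (2 * π * γ * (k : ℝ)) / (π * (k : ℝ))) * ee (y * (k : ℝ))
    = Complex.ofReal (∑ j ∈ Finset.range K,
        (Real.sin (2*π*((j:ℝ)+1)*(y+γ))/((j:ℝ)+1) - Real.sin (2*π*((j:ℝ)+1)*(y-γ))/((j:ℝ)+1)) / π) := by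
  have hπ : (π:ℝ) ≠ 0 := Real.pi_ne_zero
  set h : ℤ → ℂ := fun k =>
    Complex.ofReal (Real.sin (2 * π * γ * (k : ℝ)) / (π * (k : ℝ))) * ee (y * (k : ℝ)) with hh
  have hsetsplit : (Finset.Icc (-(K : ℤ)) (K : ℤ)).filter (· ≠ 0)
      = (Finset.Icc 1 (K:ℤ)) ∪ (Finset.Icc 1 (K:ℤ)).image (fun k => -k) := by
    ext k
    simp only [Finset.mem_filter, Finset.mem_Icc, Finset.mem_union, Finset.mem_image, ne_eq]
    constructor
    · rintro ⟨⟨h1, h2⟩, h3⟩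
      rcases lt_or_gt_of_ne h3 with hlt | hgt
      · exact Or.inr ⟨-k, ⟨by omega, by omega⟩, by omega⟩
      · exact Or.inl ⟨by omega, h2⟩
    · rintro (⟨h1, h2⟩ | ⟨m, ⟨hm1, hm2⟩, rfl⟩) <;> refine ⟨⟨by omega, by omega⟩, by omega⟩
  have hdisj : Disjoint (Finset.Icc 1 (K:ℤ)) ((Finset.Icc 1 (K:ℤ)).image (fun k => -k)) := by
    rw [Finset.disjoint_left]
    rintro k hk hk'
    simp only [Finset.mem_Icc] at hk
    simp only [Finset.mem_image, Finset.mem_Icc] at hk'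
    obtain ⟨m, hm, rfl⟩ := hk'
    omega
  rw [hsetsplit, Finset.sum_union hdisj,
    Finset.sum_image (fun a _ b _ hab => by omega : ∀ a ∈ Finset.Icc 1 (K:ℤ), ∀ b ∈ Finset.Icc 1 (K:ℤ), -a = -b → a = b),
    ← Finset.sum_add_distrib]
  -- pointwise pairing identity
  have hkey : ∀ k ∈ Finset.Icc (1:ℤ) (K:ℤ), h k + h (-k)
      = Complex.ofReal ((Real.sin (2*π*(k:ℝ)*(y+γ))/(k:ℝ) - Real.sin (2*π*(k:ℝ)*(y-γ))/(k:ℝ)) / π) := by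
    intro k _
    rw [hh]
    simp only
    have e1 : ((-k : ℤ) : ℝ) = -(k:ℝ) := by push_cast; ring
    rw [e1, show 2 * π * γ * -(k:ℝ) = -(2 * π * γ * (k:ℝ)) by ring,
      show y * -(k:ℝ) = -(y * (k:ℝ)) by ring, Real.sin_neg]
    rw [show -Real.sin (2*π*γ*(k:ℝ)) / (π * -(k:ℝ)) = Real.sin (2*π*γ*(k:ℝ)) / (π * (k:ℝ)) by
      rw [mul_neg, div_neg, neg_div, neg_neg]]
    rw [← mul_add, ee_add_neg (y * (k:ℝ)), ← Complex.ofReal_mul]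
    congr 1
    have hsin : Real.sin (2*π*(k:ℝ)*(y+γ)) - Real.sin (2*π*(k:ℝ)*(y-γ))
        = 2 * Real.sin (2*π*γ*(k:ℝ)) * Real.cos (2*π*y*(k:ℝ)) := by
      rw [show 2*π*(k:ℝ)*(y+γ) = 2*π*y*(k:ℝ) + 2*π*γ*(k:ℝ) by ring,
        show 2*π*(k:ℝ)*(y-γ) = 2*π*y*(k:ℝ) - 2*π*γ*(k:ℝ) by ring,
        Real.sin_add, Real.sin_sub]
      ring
    rw [div_sub_div_same, hsin, show 2*π*(y*(k:ℝ)) = 2*π*y*(k:ℝ) by ring]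
    field_simp
  rw [Finset.sum_congr rfl hkey]
  -- reindex Icc 1 K to range K
  have himg : Finset.Icc (1:ℤ) (K:ℤ) = (Finset.range K).image (fun j : ℕ => (j:ℤ)+1) := by
    ext k
    simp only [Finset.mem_Icc, Finset.mem_image, Finset.mem_range]
    constructor
    · rintro ⟨h1, h2⟩
      exact ⟨(k-1).toNat, by omega, by omega⟩
    · rintro ⟨j, hj, rfl⟩
      omega
  rw [himg, Finset.sum_image (fun a _ b _ hab => by omega :
    ∀ a ∈ Finset.range K, ∀ b ∈ Finset.range K, (a:ℤ)+1 = (b:ℤ)+1 → a = b)]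
  rw [Complex.ofReal_sum]
  refine Finset.sum_congr rfl (fun j _ => ?_)
  congr 1
  push_cast
  ring

lemma round_min (y : ℝ) (m : ℤ) : |y - round y| ≤ |y - (m:ℝ)| := by
  rcases eq_or_ne m (round y) with rfl | hne
  · exact le_rfl
  · have h1 : |y - round y| ≤ 1/2 := abs_sub_round y
    have h2 : (1:ℝ) ≤ |((round y : ℤ):ℝ) - (m:ℝ)| := by
      rw [show ((round y:ℤ):ℝ) - (m:ℝ) = ((round y - m : ℤ):ℝ) by push_cast; ring, ← Int.cast_abs]
      exact_mod_cast Int.one_le_abs (by omega)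
    have h3 : |((round y:ℤ):ℝ) - (m:ℝ)| ≤ |((round y:ℤ):ℝ) - y| + |y - (m:ℝ)| :=
      abs_sub_le _ _ _
    have h4 : |((round y:ℤ):ℝ) - y| = |y - round y| := abs_sub_comm _ _
    linarith

lemma dzi_lip : LipschitzWith 1 (fun y : ℝ => |y - round y|) := by
  apply LipschitzWith.of_dist_le_mul
  intro a b
  rw [NNReal.coe_one, one_mul, Real.dist_eq, Real.dist_eq]
  rw [abs_sub_le_iff]
  constructor
  · have h1 : |a - round a| ≤ |a - (round b : ℤ)| := round_min a (round b)
    have h2 : |a - ((round b : ℤ):ℝ)| ≤ |a - b| + |b - ((round b:ℤ):ℝ)| := abs_sub_le _ _ _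
    linarith
  · have h1 : |b - round b| ≤ |b - (round a : ℤ)| := round_min b (round a)
    have h2 : |b - ((round a : ℤ):ℝ)| ≤ |b - a| + |a - ((round a:ℤ):ℝ)| := abs_sub_le _ _ _
    have h3 : |b - a| = |a - b| := abs_sub_comm _ _
    linarith


/-- at rational time `t = u/q` the limit defining `U(u/q,x)` exists and equals
`(1/q)·Σ_v (Σ_w e((u·w^n − v·w)/q))·f_γ(x + v/q)`; in particular `x ↦ U(u/q,x)` is constant
on every interval containing no point of `{v/q + σγ + l}`. -/
theorem stmt10 (n : ℕ) (hn : 2 ≤ n) (γ : ℝ) (hγ : γ ∈ Set.Ioo (0 : ℝ) (1 / 2))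
    (u q : ℤ) (hq : 1 ≤ q) :
    (∀ x : ℝ, Tendsto (fun K : ℕ => Upartial n γ ((u : ℝ) / (q : ℝ)) x K) atTop
      (nhds (Uq n γ u q x))) ∧
    (∀ I : Set ℝ, I.OrdConnected →
      (∀ y ∈ I, ¬ ∃ (v : ℕ) (σ : ℝ) (l : ℤ),
        v < q.toNat ∧ (σ = 1 ∨ σ = -1) ∧ y = (v : ℝ) / (q : ℝ) + σ * γ + (l : ℝ)) →
      ∀ x₁ ∈ I, ∀ x₂ ∈ I, Uq n γ u q x₁ = Uq n γ u q x₂) := by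
  obtain ⟨hγ0, hγ2⟩ := hγ
  have hπ : (π:ℝ) ≠ 0 := Real.pi_ne_zero
  have hqR : (q:ℝ) ≠ 0 := by positivity
  have hqC : (q:ℂ) ≠ 0 := by exact_mod_cast (by positivity : (q:ℝ) ≠ 0)
  constructor
  · intro x
    -- rearrangement of the partial sums
    have hrearr : ∀ K : ℕ, Upartial n γ ((u:ℝ)/(q:ℝ)) x K
        = (q:ℂ)⁻¹ * ∑ v ∈ Finset.range q.toNat,
            (∑ w ∈ Finset.range q.toNat, ee (((u * (w:ℤ)^n - (v:ℤ)*(w:ℤ) : ℤ):ℝ)/(q:ℝ))) *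
            (Complex.ofReal (2*γ) + ∑ k ∈ (Finset.Icc (-(K:ℤ)) (K:ℤ)).filter (· ≠ 0),
              Complex.ofReal (Real.sin (2*π*γ*(k:ℝ))/(π*(k:ℝ))) * ee ((x + (v:ℝ)/(q:ℝ)) * (k:ℝ))) := by
      intro K
      rw [Upartial]
      set S : ℕ → ℂ := fun v =>
        ∑ w ∈ Finset.range q.toNat, ee (((u * (w:ℤ)^n - (v:ℤ)*(w:ℤ) : ℤ):ℝ)/(q:ℝ)) with hS
      have hSsum : ∑ v ∈ Finset.range q.toNat, S v = (q:ℂ) := by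
        have h0 := decomp n (by omega) u hq 0
        simp only [Int.cast_zero, mul_zero, zero_div, ee_zero, mul_one] at h0
        rw [show ((u * 0 ^ n : ℤ):ℝ) = 0 by rw [zero_pow (by omega : n ≠ 0)]; push_cast; ring] at h0
        rw [zero_div, ee_zero, mul_one] at h0
        exact h0
      have hterm : ∀ k : ℤ,
          Complex.ofReal (Real.sin (2*π*γ*(k:ℝ))/(π*(k:ℝ))) * ee ((u:ℝ)/(q:ℝ) * (k:ℝ)^n + x*(k:ℝ))
          = (q:ℂ)⁻¹ * ∑ v ∈ Finset.range q.toNat, S v *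
              (Complex.ofReal (Real.sin (2*π*γ*(k:ℝ))/(π*(k:ℝ))) * ee ((x + (v:ℝ)/(q:ℝ)) * (k:ℝ))) := by
        intro k
        have hdec : ee (((u * k ^ n : ℤ):ℝ)/(q:ℝ))
            = (q:ℂ)⁻¹ * ∑ v ∈ Finset.range q.toNat, S v * ee ((v:ℝ)*(k:ℝ)/(q:ℝ)) := by
          rw [eq_inv_mul_iff_mul_eq₀ hqC]
          exact (decomp n (by omega) u hq k).symm
        have hsplit : ee ((u:ℝ)/(q:ℝ) * (k:ℝ)^n + x*(k:ℝ))
            = ee (((u * k ^ n : ℤ):ℝ)/(q:ℝ)) * ee (x*(k:ℝ)) := by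
          rw [← ee_add]
          congr 1
          push_cast
          ring
        calc Complex.ofReal (Real.sin (2*π*γ*(k:ℝ))/(π*(k:ℝ))) * ee ((u:ℝ)/(q:ℝ) * (k:ℝ)^n + x*(k:ℝ))
            = ee (((u * k ^ n : ℤ):ℝ)/(q:ℝ)) *
                (ee (x*(k:ℝ)) * Complex.ofReal (Real.sin (2*π*γ*(k:ℝ))/(π*(k:ℝ)))) := by
              rw [hsplit]; ring
          _ = ((q:ℂ)⁻¹ * ∑ v ∈ Finset.range q.toNat, S v * ee ((v:ℝ)*(k:ℝ)/(q:ℝ))) *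
                (ee (x*(k:ℝ)) * Complex.ofReal (Real.sin (2*π*γ*(k:ℝ))/(π*(k:ℝ)))) := by
              rw [hdec]
          _ = (q:ℂ)⁻¹ * ∑ v ∈ Finset.range q.toNat, (S v * ee ((v:ℝ)*(k:ℝ)/(q:ℝ))) *
                (ee (x*(k:ℝ)) * Complex.ofReal (Real.sin (2*π*γ*(k:ℝ))/(π*(k:ℝ)))) := by
              rw [mul_assoc, Finset.sum_mul]
          _ = (q:ℂ)⁻¹ * ∑ v ∈ Finset.range q.toNat, S v *
                (Complex.ofReal (Real.sin (2*π*γ*(k:ℝ))/(π*(k:ℝ))) * ee ((x + (v:ℝ)/(q:ℝ)) * (k:ℝ))) := by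
              congr 1
              refine Finset.sum_congr rfl (fun v _ => ?_)
              rw [show ee ((x + (v:ℝ)/(q:ℝ)) * (k:ℝ)) = ee ((v:ℝ)*(k:ℝ)/(q:ℝ)) * ee (x*(k:ℝ)) from by
                rw [← ee_add]; congr 1; field_simp; ring]
              ring
      rw [Finset.sum_congr rfl (fun k _ => hterm k), ← Finset.mul_sum, Finset.sum_comm]
      conv_lhs => rw [show (Complex.ofReal (2*γ)) = (q:ℂ)⁻¹ * ((∑ v ∈ Finset.range q.toNat, S v) * Complex.ofReal (2*γ)) by
        rw [hSsum, inv_mul_cancel_left₀ hqC]]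
      rw [← mul_add, Finset.sum_mul, ← Finset.sum_add_distrib]
      congr 1
      refine Finset.sum_congr rfl (fun v _ => ?_)
      rw [mul_add, Finset.mul_sum]
    simp only [hrearr]
    rw [Uq]
    apply Tendsto.const_mul
    apply tendsto_finset_sum
    intro v _
    apply Tendsto.const_mul
    have hcompl : ∀ K : ℕ, Complex.ofReal (2*γ) +
        ∑ k ∈ (Finset.Icc (-(K:ℤ)) (K:ℤ)).filter (· ≠ 0),
          Complex.ofReal (Real.sin (2*π*γ*(k:ℝ))/(π*(k:ℝ))) * ee ((x + (v:ℝ)/(q:ℝ)) * (k:ℝ))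
        = Complex.ofReal (2*γ + ∑ j ∈ Finset.range K,
            (Real.sin (2*π*((j:ℝ)+1)*((x + (v:ℝ)/(q:ℝ))+γ))/((j:ℝ)+1)
              - Real.sin (2*π*((j:ℝ)+1)*((x + (v:ℝ)/(q:ℝ))-γ))/((j:ℝ)+1)) / π) := by
      intro K
      rw [pairing γ (x + (v:ℝ)/(q:ℝ)) K, Complex.ofReal_add]
    simp only [hcompl]
    have hreal : Tendsto (fun K : ℕ => 2*γ + ∑ j ∈ Finset.range K,
        (Real.sin (2*π*((j:ℝ)+1)*((x + (v:ℝ)/(q:ℝ))+γ))/((j:ℝ)+1)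
          - Real.sin (2*π*((j:ℝ)+1)*((x + (v:ℝ)/(q:ℝ))-γ))/((j:ℝ)+1)) / π) atTop
        (nhds (fgam γ (x + (v:ℝ)/(q:ℝ)))) := by
      rw [fgam_eq hγ0 hγ2]
      apply Tendsto.const_add
      have hsplit2 : ∀ K : ℕ, ∑ j ∈ Finset.range K,
          (Real.sin (2*π*((j:ℝ)+1)*((x + (v:ℝ)/(q:ℝ))+γ))/((j:ℝ)+1)
            - Real.sin (2*π*((j:ℝ)+1)*((x + (v:ℝ)/(q:ℝ))-γ))/((j:ℝ)+1)) / π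
          = ((∑ j ∈ Finset.range K, Real.sin (2*π*((j:ℝ)+1)*((x + (v:ℝ)/(q:ℝ))+γ))/((j:ℝ)+1))
            - ∑ j ∈ Finset.range K, Real.sin (2*π*((j:ℝ)+1)*((x + (v:ℝ)/(q:ℝ))-γ))/((j:ℝ)+1)) / π := by
        intro K
        rw [← Finset.sum_div, Finset.sum_sub_distrib]
      simp only [hsplit2]
      exact ((tendsto_saw _).sub (tendsto_saw _)).div_const π
    exact (Complex.continuous_ofReal.tendsto _).comp hreal
  · intro I hI hno x₁ hx₁ x₂ hx₂
    rw [Uq, Uq]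
    congr 1
    refine Finset.sum_congr rfl (fun v hv => ?_)
    have hvq : v < q.toNat := Finset.mem_range.mp hv
    have hfg : fgam γ (x₁ + (v:ℝ)/(q:ℝ)) = fgam γ (x₂ + (v:ℝ)/(q:ℝ)) := by
      set c := (v:ℝ)/(q:ℝ) with hc
      have hcont : Continuous (fun x : ℝ => |x + c - round (x + c)|) :=
        dzi_lip.continuous.comp (by continuity)
      have hnojump : ∀ y ∈ I, |y + c - round (y + c)| ≠ γ := by
        intro y hy habs
        apply hno y hy
        have hqtq : ((q.toNat : ℕ) : ℝ) = (q:ℝ) := by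
          exact_mod_cast congrArg (Int.cast : ℤ → ℝ) (Int.toNat_of_nonneg (by omega))
        rcases (abs_eq (le_of_lt hγ0)).mp habs with h | h
        · by_cases hv0 : v = 0
          · refine ⟨0, 1, round (y + c), by omega, Or.inl rfl, ?_⟩
            have hc0 : c = 0 := by rw [hc, hv0]; norm_num
            rw [hc0] at h ⊢
            push_cast
            simp only [zero_div, one_mul, neg_one_mul]
            linarith
          · refine ⟨q.toNat - v, 1, round (y + c) - 1, by omega, Or.inl rfl, ?_⟩
            have hcast : ((q.toNat - v : ℕ) : ℝ) = (q:ℝ) - (v:ℝ) := by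
              rw [Nat.cast_sub (le_of_lt hvq), hqtq]
            rw [hcast]
            have hdivq : ((q:ℝ) - (v:ℝ))/(q:ℝ) = 1 - c := by rw [hc]; field_simp
            rw [hdivq]
            push_cast
            linarith
        · by_cases hv0 : v = 0
          · refine ⟨0, -1, round (y + c), by omega, Or.inr rfl, ?_⟩
            have hc0 : c = 0 := by rw [hc, hv0]; norm_num
            rw [hc0] at h ⊢
            push_cast
            simp only [zero_div, one_mul, neg_one_mul]
            linarith
          · refine ⟨q.toNat - v, -1, round (y + c) - 1, by omega, Or.inr rfl, ?_⟩
            have hcast : ((q.toNat - v : ℕ) : ℝ) = (q:ℝ) - (v:ℝ) := by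
              rw [Nat.cast_sub (le_of_lt hvq), hqtq]
            rw [hcast]
            have hdivq : ((q:ℝ) - (v:ℝ))/(q:ℝ) = 1 - c := by rw [hc]; field_simp
            rw [hdivq]
            push_cast
            linarith
      have key : ∀ a ∈ I, ∀ b ∈ I, |a + c - round (a + c)| < γ →
          γ < |b + c - round (b + c)| → False := by
        intro a ha b hb hfa hfb
        rcases le_total a b with hab | hab
        · have hsub : Set.Icc a b ⊆ I := hI.out ha hb
          obtain ⟨x', hx'mem, hx'⟩ := intermediate_value_Icc hab hcont.continuousOn
            (⟨le_of_lt hfa, le_of_lt hfb⟩ : γ ∈ Set.Icc _ _)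
          exact hnojump x' (hsub hx'mem) hx'
        · have hsub : Set.Icc b a ⊆ I := hI.out hb ha
          obtain ⟨x', hx'mem, hx'⟩ := intermediate_value_Icc' hab hcont.continuousOn
            (⟨le_of_lt hfa, le_of_lt hfb⟩ : γ ∈ Set.Icc _ _)
          exact hnojump x' (hsub hx'mem) hx'
      have hne1 := hnojump x₁ hx₁
      have hne2 := hnojump x₂ hx₂
      rcases hne1.lt_or_gt with h1 | h1 <;> rcases hne2.lt_or_gt with h2 | h2
      · rw [fgam, fgam, if_pos h1, if_pos h2]
      · exact (key x₁ hx₁ x₂ hx₂ h1 h2).elim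
      · exact (key x₂ hx₂ x₁ hx₁ h2 h1).elim
      · rw [fgam, fgam, if_neg (not_lt.mpr (le_of_lt h1)), if_neg hne1,
          if_neg (not_lt.mpr (le_of_lt h2)), if_neg hne2]
    rw [hfg]
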